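/- Let f : [0,T] → ℝ be continuous and nonnegative, and suppose there are nondecreasing continuous functions C₀, C : [0,∞) → [0,∞) such that f(t) ≤ C₀(f(0))·exp(t^{1/4}·C(f(t))) for all t ∈ [0,T]. If f(0) ≤ K₁ then there exist K > 0 and T̃ ∈ (0,T] depending only on K₁, C₀, C (not on f) such that f(t) ≤ K for all t ∈ [0,T̃]. -/

import Mathlib

open Set

theorem bootstrap_uniform_bound
    (T : ℝ) (hT : 0 < T) (C₀ C : ℝ → ℝ)
    (hC₀cont : Continuous C₀) (hCcont : Continuous C)
    (hC₀mono : Monotone C₀) (hCmono : Monotone C)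
    (hC₀nonneg : ∀ x, 0 ≤ x → 0 ≤ C₀ x) (hCnonneg : ∀ x, 0 ≤ x → 0 ≤ C x)
    (K₁ : ℝ) (hK₁ : 0 ≤ K₁) :
    ∃ K > 0, ∃ T' ∈ Ioc 0 T, ∀ f : ℝ → ℝ,
      ContinuousOn f (Icc 0 T) →
      (∀ t ∈ Icc 0 T, 0 ≤ f t) →
      (∀ t ∈ Icc 0 T, f t ≤ C₀ (f 0) * Real.exp (t ^ ((1 : ℝ) / 4) * C (f t))) →
      f 0 ≤ K₁ →
      ∀ t ∈ Icc 0 T', f t ≤ K := by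
  have hC₀K₁ : 0 ≤ C₀ K₁ := hC₀nonneg _ hK₁
  set K : ℝ := 2 * C₀ K₁ + 2 with hKdef
  have hKpos : 0 < K := by positivity
  have hCK : 0 ≤ C K := hCnonneg _ hKpos.le
  set x : ℝ := Real.log 2 / (C K + 1) with hxdef
  have hxpos : 0 < x := div_pos (Real.log_pos (by norm_num)) (by linarith)
  set δ : ℝ := x ^ (4 : ℕ) with hδdef
  have hδpos : 0 < δ := by positivity
  refine ⟨K, hKpos, min T δ, ⟨lt_min hT hδpos, min_le_left _ _⟩, ?_⟩
  intro f hfc hfnonneg hfineq hf0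
  have hsub : Icc (0:ℝ) (min T δ) ⊆ Icc 0 T :=
    Icc_subset_Icc le_rfl (min_le_left _ _)
  -- f 0 < K
  have hf0K : f 0 ≤ C₀ K₁ := by
    have h := hfineq 0 ⟨le_rfl, hT.le⟩
    rw [Real.zero_rpow (by norm_num : (1:ℝ)/4 ≠ 0)] at h
    simp only [zero_mul, Real.exp_zero, mul_one] at h
    exact h.trans (hC₀mono hf0)
  have hf0ltK : f 0 < K := by simp only [hKdef]; linarith
  -- key exponent bound
  have hexp : ∀ s ∈ Icc (0:ℝ) (min T δ), s ^ ((1:ℝ)/4) * C K ≤ Real.log 2 := by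
    intro s hs
    have hs4 : s ^ ((1:ℝ)/4) ≤ x := by
      have h1 : s ^ ((1:ℝ)/4) ≤ δ ^ ((1:ℝ)/4) :=
        Real.rpow_le_rpow hs.1 (hs.2.trans (min_le_right _ _)) (by norm_num)
      have h2 : δ ^ ((1:ℝ)/4) = x := by
        rw [hδdef, ← Real.rpow_natCast x 4, ← Real.rpow_mul hxpos.le]
        norm_num
      linarith
    have hx' : x * (C K + 1) = Real.log 2 := by
      rw [hxdef, div_mul_cancel₀ _ (ne_of_gt (by linarith : (0:ℝ) < C K + 1))]
    nlinarith [Real.rpow_nonneg hs.1 ((1:ℝ)/4)]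
  intro t ht
  by_contra hcon
  push_neg at hcon
  -- IVT: find s with f s = K
  have hIVT := intermediate_value_Icc ht.1 (hfc.mono (Icc_subset_Icc le_rfl (ht.2.trans (min_le_left _ _))))
  have hKmem : K ∈ Icc (f 0) (f t) := ⟨hf0ltK.le, hcon.le⟩
  obtain ⟨s, hs, hfs⟩ := hIVT hKmem
  have hsmem : s ∈ Icc (0:ℝ) (min T δ) := ⟨hs.1, hs.2.trans ht.2⟩
  have h := hfineq s (hsub hsmem)
  rw [hfs] at h
  have hexps : Real.exp (s ^ ((1:ℝ)/4) * C K) ≤ 2 := by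
    calc Real.exp (s ^ ((1:ℝ)/4) * C K) ≤ Real.exp (Real.log 2) :=
          Real.exp_le_exp.mpr (hexp s hsmem)
      _ = 2 := Real.exp_log (by norm_num)
  have hC₀f0 : C₀ (f 0) ≤ C₀ K₁ := hC₀mono hf0
  have hC₀f0' : 0 ≤ C₀ (f 0) := hC₀nonneg _ (hfnonneg 0 ⟨le_rfl, hT.le⟩)
  have : C₀ (f 0) * Real.exp (s ^ ((1:ℝ)/4) * C K) ≤ C₀ K₁ * 2 :=
    mul_le_mul hC₀f0 hexps (Real.exp_pos _).le hC₀K₁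
  simp only [hKdef] at h this
  linarith
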